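/- Let K be a field of characteristic 0 and let A be the K-algebra generated by x, y with relation yx = q₁xy + q₄, where q₁ is a primitive n-th root of unity in K with n ≥ 2. Then xⁿ and yⁿ are central elements of A. -/

import Mathlib

/-- The defining relation of the algebra `A = K⟨x,y⟩/(yx - q₁xy - q₄)`. -/
inductive QWeylRel (K : Type*) [Field K] (q₁ q₄ : K) :
    FreeAlgebra K (Fin 2) → FreeAlgebra K (Fin 2) → Prop
  | rel : QWeylRel K q₁ q₄ (FreeAlgebra.ι K 1 * FreeAlgebra.ι K 0)
      (algebraMap K (FreeAlgebra K (Fin 2)) q₁ * (FreeAlgebra.ι K 0 * FreeAlgebra.ι K 1) +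
        algebraMap K (FreeAlgebra K (Fin 2)) q₄)

/-- The algebra `A = K⟨x,y⟩/(yx - q₁xy - q₄)`. -/
abbrev QWeyl (K : Type*) [Field K] (q₁ q₄ : K) := RingQuot (QWeylRel K q₁ q₄)

noncomputable def QWeyl.x (K : Type*) [Field K] (q₁ q₄ : K) : QWeyl K q₁ q₄ :=
  RingQuot.mkAlgHom K (QWeylRel K q₁ q₄) (FreeAlgebra.ι K 0)

noncomputable def QWeyl.y (K : Type*) [Field K] (q₁ q₄ : K) : QWeyl K q₁ q₄ :=
  RingQuot.mkAlgHom K (QWeylRel K q₁ q₄) (FreeAlgebra.ι K 1)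

section aux
variable {K : Type*} [Field K] (q₁ q₄ : K)

lemma qweyl_rel : QWeyl.y K q₁ q₄ * QWeyl.x K q₁ q₄
    = q₁ • (QWeyl.x K q₁ q₄ * QWeyl.y K q₁ q₄) + q₄ • 1 := by
  have h := RingQuot.mkAlgHom_rel K (QWeylRel.rel (K := K) (q₁ := q₁) (q₄ := q₄))
  simp only [map_mul, map_add, AlgHom.commutes] at h
  rw [QWeyl.x, QWeyl.y, h, Algebra.smul_def, Algebra.smul_def, mul_one]

lemma qweyl_yxpow (k : ℕ) : QWeyl.y K q₁ q₄ * QWeyl.x K q₁ q₄ ^ (k+1)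
    = (q₁ ^ (k+1)) • (QWeyl.x K q₁ q₄ ^ (k+1) * QWeyl.y K q₁ q₄)
      + (q₄ * ∑ i ∈ Finset.range (k+1), q₁ ^ i) • QWeyl.x K q₁ q₄ ^ k := by
  induction k with
  | zero => simpa using qweyl_rel q₁ q₄
  | succ k ih =>
    set X := QWeyl.x K q₁ q₄
    set Y := QWeyl.y K q₁ q₄
    have : Y * X ^ (k+2) = (Y * X ^ (k+1)) * X := by rw [mul_assoc, ← pow_succ]
    rw [this, ih, add_mul, smul_mul_assoc, smul_mul_assoc, mul_assoc, qweyl_rel q₁ q₄]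
    rw [Finset.sum_range_succ (n := k+1)]
    simp only [mul_add, smul_add, mul_smul_comm, smul_mul_assoc, smul_smul, mul_one,
      ← mul_assoc, ← pow_succ]
    rw [show QWeyl.x K q₁ q₄ = X from rfl, show QWeyl.y K q₁ q₄ = Y from rfl, ← pow_succ]
    module

lemma qweyl_ypowx (k : ℕ) : QWeyl.y K q₁ q₄ ^ (k+1) * QWeyl.x K q₁ q₄
    = (q₁ ^ (k+1)) • (QWeyl.x K q₁ q₄ * QWeyl.y K q₁ q₄ ^ (k+1))
      + (q₄ * ∑ i ∈ Finset.range (k+1), q₁ ^ i) • QWeyl.y K q₁ q₄ ^ k := by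
  induction k with
  | zero => simpa using qweyl_rel q₁ q₄
  | succ k ih =>
    set X := QWeyl.x K q₁ q₄
    set Y := QWeyl.y K q₁ q₄
    have : Y ^ (k+2) * X = Y * (Y ^ (k+1) * X) := by rw [← mul_assoc, ← pow_succ']
    rw [this, ih, mul_add, mul_smul_comm, mul_smul_comm, ← mul_assoc, qweyl_rel q₁ q₄]
    rw [Finset.sum_range_succ (n := k+1)]
    simp only [add_mul, mul_add, smul_add, mul_smul_comm, smul_mul_assoc, smul_smul,
      one_mul, mul_one, mul_assoc, ← pow_succ']
    rw [show QWeyl.x K q₁ q₄ = X from rfl, show QWeyl.y K q₁ q₄ = Y from rfl, ← pow_succ']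
    module

end aux

theorem stmt1 (K : Type*) [Field K] [CharZero K] (q₁ q₄ : K) (n : ℕ) (hn : 2 ≤ n)
    (hq₁ : IsPrimitiveRoot q₁ n) :
    QWeyl.x K q₁ q₄ ^ n ∈ Subalgebra.center K (QWeyl K q₁ q₄) ∧
    QWeyl.y K q₁ q₄ ^ n ∈ Subalgebra.center K (QWeyl K q₁ q₄) := by
  set X := QWeyl.x K q₁ q₄ with hX
  set Y := QWeyl.y K q₁ q₄ with hY
  obtain ⟨k, rfl⟩ : ∃ k, n = k + 1 := ⟨n - 1, by omega⟩
  have hne : q₁ ≠ 1 := hq₁.ne_one (by omega)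
  have hpow : q₁ ^ (k+1) = 1 := hq₁.pow_eq_one
  have hsum : ∑ i ∈ Finset.range (k+1), q₁ ^ i = 0 := by
    rw [geom_sum_eq hne, hpow, sub_self, zero_div]
  have hyx : Y * X ^ (k+1) = X ^ (k+1) * Y := by
    rw [qweyl_yxpow, hpow, hsum, mul_zero, zero_smul, add_zero, one_smul]
  have hxy : Y ^ (k+1) * X = X * Y ^ (k+1) := by
    rw [qweyl_ypowx, hpow, hsum, mul_zero, zero_smul, add_zero, one_smul]
  have key : ∀ z : QWeyl K q₁ q₄, z * X = X * z → z * Y = Y * z →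
      z ∈ Subalgebra.center K (QWeyl K q₁ q₄) := by
    intro z hzx hzy
    rw [Subalgebra.mem_center_iff]
    intro a
    obtain ⟨f, rfl⟩ := RingQuot.mkAlgHom_surjective K (QWeylRel K q₁ q₄) a
    induction f using FreeAlgebra.induction with
    | grade0 c => rw [AlgHom.commutes, Algebra.commutes]
    | grade1 i =>
      fin_cases i
      · exact hzx.symm
      · exact hzy.symm
    | mul a b ha hb => rw [map_mul, mul_assoc, hb, ← mul_assoc, ha, mul_assoc]
    | add a b ha hb => rw [map_add, add_mul, mul_add, ha, hb]
  constructor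
  · exact key _ (by rw [← pow_succ', ← pow_succ]) hyx.symm
  · exact key _ hxy (by rw [← pow_succ', ← pow_succ])
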